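/- Let L > 0, c_p > 0, D ≥ 0 and x* ∈ E. For each t ∈ ℕ let f_t : E → ℝ be differentiable and L-smooth, let ℓ_t ∈ ℝ satisfy ℓ_t ≤ f_t(y) for all y ∈ E, and let x_t ∈ E be points with ∇f_t(x_t) ≠ 0. Let (η_t) be the AdaSPS stepsizes, and assume that for all t: ‖x_{t+1} − x*‖ ≤ ‖x_t − η_t∇f_t(x_t) − x*‖ (as holds for projected SGD onto a convex set containing x*, by nonexpansiveness of the Euclidean projection) and ‖x_t − x*‖ ≤ D. Then for every T ≥ 1: Σ_{t=0}^{T−1} ⟨∇f_t(x_t), x_t − x*⟩ ≤ (2c_p L D² + 1/c_p)·√(Σ_{t=0}^{T−1} (f_t(x_t) − ℓ_t)). -/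

import Mathlib

open Finset RealInnerProductSpace


lemma descent_lossy {d : ℕ} (L : ℝ) (hL : 0 < L)
    (f : EuclideanSpace ℝ (Fin d) → ℝ) (G : EuclideanSpace ℝ (Fin d) → EuclideanSpace ℝ (Fin d))
    (hgrad : ∀ y, HasGradientAt f (G y) y)
    (hsmooth : ∀ u v, ‖G u - G v‖ ≤ L * ‖u - v‖)
    (ℓ : ℝ) (hℓ : ∀ y, ℓ ≤ f y) (x : EuclideanSpace ℝ (Fin d)) :
    ‖G x‖ ^ 2 ≤ 4 * L * (f x - ℓ) := by
  set y : EuclideanSpace ℝ (Fin d) := x - (1 / (2 * L)) • G x with hy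
  -- the auxiliary function
  set φ : EuclideanSpace ℝ (Fin d) → ℝ := fun z => f z - ⟪G x, z⟫ with hφ
  have key : ‖φ y - φ x‖ ≤ (L * ‖y - x‖) * ‖y - x‖ := by
    apply (convex_segment x y).norm_image_sub_le_of_norm_hasFDerivWithin_le
      (f' := fun z => (InnerProductSpace.toDual ℝ _) (G z) - (InnerProductSpace.toDual ℝ _) (G x))
      (fun z hz => ?_) (fun z hz => ?_) (left_mem_segment ℝ x y) (right_mem_segment ℝ x y)
    · exact (((hgrad z).hasFDerivAt).sub ((InnerProductSpace.toDual ℝ _ (G x)).hasFDerivAt)).hasFDerivWithinAt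
    · rw [← map_sub]
      rw [(InnerProductSpace.toDual ℝ _).norm_map]
      calc ‖G z - G x‖ ≤ L * ‖z - x‖ := hsmooth z x
        _ ≤ L * ‖y - x‖ := by
            gcongr
            obtain ⟨a, b, ha, hb, hab, rfl⟩ := hz
            have : a • x + b • y - x = b • (y - x) := by
              rw [smul_sub]; rw [show a = 1 - b by linarith]; module
            rw [this, norm_smul, Real.norm_eq_abs, abs_of_nonneg hb]
            nlinarith [norm_nonneg (y - x)]
  have hyx : y - x = (-(1 / (2 * L))) • G x := by rw [hy]; module
  have hnyx : ‖y - x‖ = 1 / (2 * L) * ‖G x‖ := by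
    rw [hyx, norm_smul, Real.norm_eq_abs, abs_neg, abs_of_pos (by positivity)]
  have hip : (⟪G x, y⟫ - ⟪G x, x⟫ : ℝ) = -(1 / (2 * L)) * ‖G x‖ ^ 2 := by
    rw [← inner_sub_right, hyx, real_inner_smul_right, real_inner_self_eq_norm_sq]
  have h1 : φ y - φ x ≤ L * ‖y - x‖ * ‖y - x‖ := by
    have := le_trans (le_abs_self (φ y - φ x)) (by simpa [Real.norm_eq_abs] using key)
    linarith
  simp only [hφ] at h1
  have h2 := hℓ y
  have hL' : (0:ℝ) < 4 * L := by linarith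
  rw [hnyx] at h1
  have e1 : L * (1 / (2 * L) * ‖G x‖) * (1 / (2 * L) * ‖G x‖) = ‖G x‖ ^ 2 / (4 * L) := by
    field_simp; ring
  rw [e1] at h1
  have h3 : f y ≤ f x - ‖G x‖ ^ 2 / (4 * L) := by
    have e2 : 1 / (2 * L) * ‖G x‖ ^ 2 = 2 * (‖G x‖ ^ 2 / (4 * L)) := by
      field_simp; ring
    linarith [hip, h1]
  have h4 : ‖G x‖ ^ 2 / (4 * L) ≤ f x - ℓ := by linarith
  have e3 : ‖G x‖ ^ 2 = 4 * L * (‖G x‖ ^ 2 / (4 * L)) := by field_simp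
  rw [e3]
  exact mul_le_mul_of_nonneg_left h4 (le_of_lt hL')

lemma sum_div_sqrt_aux (a : ℕ → ℝ) (ha : ∀ t, 0 < a t) :
    ∀ T, ∑ t ∈ range T, a t / Real.sqrt (∑ s ∈ range (t + 1), a s) ≤
      2 * Real.sqrt (∑ t ∈ range T, a t) := by
  intro T
  induction T with
  | zero => simp
  | succ T ih =>
    rw [Finset.sum_range_succ, Finset.sum_range_succ (f := a)]
    have hP0 : 0 ≤ ∑ t ∈ range T, a t := Finset.sum_nonneg fun i _ => (ha i).le
    have haT := ha T
    set P := ∑ t ∈ range T, a t with hP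
    set r := Real.sqrt (P + a T) with hr
    set s := Real.sqrt P with hs
    have hr0 : 0 < r := Real.sqrt_pos.2 (by linarith)
    have hs0 : 0 ≤ s := Real.sqrt_nonneg _
    have hr2 : r ^ 2 = P + a T := Real.sq_sqrt (by linarith)
    have hs2 : s ^ 2 = P := Real.sq_sqrt hP0
    have hsr : s ≤ r := Real.sqrt_le_sqrt (by linarith)
    have key : a T / r ≤ 2 * r - 2 * s := by
      rw [div_le_iff₀ hr0]
      nlinarith [sq_nonneg (r - s)]
    linarith [ih]

/-- AdaSPS key inequality (projected SGD, bounded iterates): under `L`-smoothness of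
each `f t`, lower bounds `ℓ t ≤ f t`, nonzero gradients at the iterates, AdaSPS
stepsizes `η`, nonexpansive steps `‖x_{t+1} − x*‖ ≤ ‖x_t − η_t ∇f_t(x_t) − x*‖`, and
`‖x_t − x*‖ ≤ D`, one has for every `T ≥ 1`:
`Σ_{t<T} ⟨∇f_t(x_t), x_t − x*⟩ ≤ (2 c_p L D² + 1/c_p)·√(Σ_{t<T} (f_t(x_t) − ℓ_t))`. -/
theorem stmt_10 {d : ℕ} (L c_p D : ℝ) (hL : 0 < L) (hcp : 0 < c_p) (hD : 0 ≤ D)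
    (xstar : EuclideanSpace ℝ (Fin d))
    (f : ℕ → EuclideanSpace ℝ (Fin d) → ℝ)
    (G : ℕ → EuclideanSpace ℝ (Fin d) → EuclideanSpace ℝ (Fin d))
    (x : ℕ → EuclideanSpace ℝ (Fin d)) (ℓ : ℕ → ℝ) (η : ℕ → ℝ)
    (hgrad : ∀ t y, HasGradientAt (f t) (G t y) y)
    (hsmooth : ∀ t u v, ‖G t u - G t v‖ ≤ L * ‖u - v‖)
    (hℓ : ∀ t y, ℓ t ≤ f t y)
    (hGne : ∀ t, G t (x t) ≠ 0)
    (hη0 : η 0 = (f 0 (x 0) - ℓ 0) /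
      (c_p * ‖G 0 (x 0)‖ ^ 2 * Real.sqrt (f 0 (x 0) - ℓ 0)))
    (hη : ∀ t, η (t + 1) = min
      ((f (t + 1) (x (t + 1)) - ℓ (t + 1)) /
        (c_p * ‖G (t + 1) (x (t + 1))‖ ^ 2 *
          Real.sqrt (∑ s ∈ range (t + 2), (f s (x s) - ℓ s))))
      (η t))
    (hstep : ∀ t, ‖x (t + 1) - xstar‖ ≤ ‖x t - η t • G t (x t) - xstar‖)
    (hbound : ∀ t, ‖x t - xstar‖ ≤ D) :
    ∀ T : ℕ, 1 ≤ T →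
      (∑ t ∈ range T, ⟪G t (x t), x t - xstar⟫) ≤
        (2 * c_p * L * D ^ 2 + 1 / c_p) *
          Real.sqrt (∑ t ∈ range T, (f t (x t) - ℓ t)) := by
  -- abbreviations
  set Δ : ℕ → ℝ := fun t => f t (x t) - ℓ t with hΔdef
  set S : ℕ → ℝ := fun t => ∑ s ∈ range (t + 1), Δ s with hSdef
  have hG4L : ∀ t, ‖G t (x t)‖ ^ 2 ≤ 4 * L * Δ t := fun t =>
    descent_lossy L hL (f t) (G t) (hgrad t) (hsmooth t) (ℓ t) (hℓ t) (x t)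
  have hgpos : ∀ t, 0 < ‖G t (x t)‖ ^ 2 := fun t =>
    pow_pos (norm_pos_iff.2 (hGne t)) 2
  have hΔpos : ∀ t, 0 < Δ t := fun t => by nlinarith [hG4L t, hgpos t]
  have hSpos : ∀ t, 0 < S t := fun t =>
    Finset.sum_pos (fun i _ => hΔpos i) (by simp)
  have hsqS : ∀ t, 0 < Real.sqrt (S t) := fun t => Real.sqrt_pos.2 (hSpos t)
  have hSsucc : ∀ t, S (t + 1) = S t + Δ (t + 1) := fun t => Finset.sum_range_succ Δ (t + 1)
  have hSmono : ∀ t, S t ≤ S (t + 1) := fun t => by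
    rw [hSsucc t]; linarith [hΔpos (t + 1)]
  -- stepsize upper bound
  have hηub : ∀ t, η t ≤ Δ t / (c_p * ‖G t (x t)‖ ^ 2 * Real.sqrt (S t)) := by
    intro t
    cases t with
    | zero =>
      rw [hη0]
      have : S 0 = Δ 0 := by simp [hSdef]
      rw [this]
    | succ t =>
      rw [hη t]
      exact min_le_left _ _
  -- stepsize lower bound
  have hηlb : ∀ t, 1 / (4 * c_p * L * Real.sqrt (S t)) ≤ η t := by
    have lbA : ∀ t, 1 / (4 * c_p * L * Real.sqrt (S t)) ≤
        Δ t / (c_p * ‖G t (x t)‖ ^ 2 * Real.sqrt (S t)) := by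
      intro t
      rw [div_le_div_iff₀ (mul_pos (by positivity) (hsqS t)) (mul_pos (mul_pos hcp (hgpos t)) (hsqS t))]
      have h1 : 0 ≤ c_p * Real.sqrt (S t) := by positivity
      nlinarith [mul_le_mul_of_nonneg_left (hG4L t) h1, hsqS t]
    intro t
    induction t with
    | zero =>
      refine le_trans (lbA 0) ?_
      rw [hη0]
      have : S 0 = Δ 0 := by simp [hSdef]
      rw [this]
    | succ t ih =>
      rw [hη t]
      refine le_min (le_trans ?_ (lbA (t + 1))) (le_trans ?_ ih)
      · have : Real.sqrt (∑ s ∈ range (t + 2), (f s (x s) - ℓ s)) = Real.sqrt (S (t + 1)) := rfl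
        rw [this]
      · apply one_div_le_one_div_of_le (mul_pos (by positivity) (hsqS t))
        exact mul_le_mul_of_nonneg_left (Real.sqrt_le_sqrt (hSmono t)) (by positivity)
  have hηpos : ∀ t, 0 < η t := fun t => lt_of_lt_of_le
    (by have := hsqS t; positivity) (hηlb t)
  have hηmono : ∀ t, η (t + 1) ≤ η t := fun t => by rw [hη t]; exact min_le_right _ _
  -- per-step inequality
  have hkey : ∀ t, ⟪G t (x t), x t - xstar⟫ ≤
      (‖x t - xstar‖ ^ 2 - ‖x (t + 1) - xstar‖ ^ 2) / (2 * η t)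
        + Δ t / Real.sqrt (S t) * (1 / (2 * c_p)) := by
    intro t
    have hc0 : c_p ≠ 0 := ne_of_gt hcp
    have hg0 : ‖G t (x t)‖ ^ 2 ≠ 0 := ne_of_gt (hgpos t)
    have hs0 : Real.sqrt (S t) ≠ 0 := ne_of_gt (hsqS t)
    have hrw : x t - η t • G t (x t) - xstar = (x t - xstar) - η t • G t (x t) := by
      abel
    have hexp : ‖x t - η t • G t (x t) - xstar‖ ^ 2
        = ‖x t - xstar‖ ^ 2 - 2 * η t * ⟪G t (x t), x t - xstar⟫
          + η t ^ 2 * ‖G t (x t)‖ ^ 2 := by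
      rw [hrw, norm_sub_sq_real, real_inner_smul_right, real_inner_comm, norm_smul,
        Real.norm_eq_abs, mul_pow, sq_abs]
      ring
    have hsq : ‖x (t + 1) - xstar‖ ^ 2 ≤ ‖x t - η t • G t (x t) - xstar‖ ^ 2 :=
      pow_le_pow_left₀ (norm_nonneg _) (hstep t) 2
    have h1 : 2 * η t * ⟪G t (x t), x t - xstar⟫ ≤
        ‖x t - xstar‖ ^ 2 - ‖x (t + 1) - xstar‖ ^ 2 + η t ^ 2 * ‖G t (x t)‖ ^ 2 := by
      rw [hexp] at hsq; linarith
    have h2 : η t ^ 2 * ‖G t (x t)‖ ^ 2 ≤ η t * (Δ t / (c_p * Real.sqrt (S t))) := by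
      calc η t ^ 2 * ‖G t (x t)‖ ^ 2 = η t * (η t * ‖G t (x t)‖ ^ 2) := by ring
        _ ≤ (Δ t / (c_p * ‖G t (x t)‖ ^ 2 * Real.sqrt (S t))) * (η t * ‖G t (x t)‖ ^ 2) :=
            mul_le_mul_of_nonneg_right (hηub t)
              (mul_nonneg (hηpos t).le (hgpos t).le)
        _ = η t * (Δ t / (c_p * Real.sqrt (S t))) := by
            field_simp [norm_ne_zero_iff.2 (hGne t)]
    rw [← sub_le_iff_le_add, le_div_iff₀ (by linarith [hηpos t] : (0:ℝ) < 2 * η t)]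
    have e : Δ t / Real.sqrt (S t) * (1 / (2 * c_p)) * (2 * η t)
        = η t * (Δ t / (c_p * Real.sqrt (S t))) := by
      field_simp
    have lhs_eq : (⟪G t (x t), x t - xstar⟫ - Δ t / Real.sqrt (S t) * (1 / (2 * c_p)))
        * (2 * η t)
        = 2 * η t * ⟪G t (x t), x t - xstar⟫
          - Δ t / Real.sqrt (S t) * (1 / (2 * c_p)) * (2 * η t) := by ring
    rw [lhs_eq, e]
    linarith
  -- Abel summation bound
  have habel : ∀ T, ∑ t ∈ range (T + 1),
      (‖x t - xstar‖ ^ 2 - ‖x (t + 1) - xstar‖ ^ 2) / (2 * η t) ≤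
      (D ^ 2 - ‖x (T + 1) - xstar‖ ^ 2) / (2 * η T) := by
    intro T
    induction T with
    | zero =>
      rw [Finset.sum_range_one]
      apply (div_le_div_iff_of_pos_right (by linarith [hηpos 0] : (0:ℝ) < 2 * η 0)).2
      have := pow_le_pow_left₀ (norm_nonneg (x 0 - xstar)) (hbound 0) 2
      linarith
    | succ T ih =>
      rw [Finset.sum_range_succ]
      have h1 : (D ^ 2 - ‖x (T + 1) - xstar‖ ^ 2) / (2 * η T) ≤
          (D ^ 2 - ‖x (T + 1) - xstar‖ ^ 2) / (2 * η (T + 1)) := by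
        apply div_le_div_of_nonneg_left ?_
          (by linarith [hηpos (T + 1)] : (0:ℝ) < 2 * η (T + 1))
          (by linarith [hηmono T])
        have := pow_le_pow_left₀ (norm_nonneg (x (T + 1) - xstar)) (hbound (T + 1)) 2
        linarith
      have h2 : (D ^ 2 - ‖x (T + 1) - xstar‖ ^ 2) / (2 * η (T + 1)) +
          (‖x (T + 1) - xstar‖ ^ 2 - ‖x (T + 1 + 1) - xstar‖ ^ 2) / (2 * η (T + 1)) =
          (D ^ 2 - ‖x (T + 1 + 1) - xstar‖ ^ 2) / (2 * η (T + 1)) := by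
        rw [← add_div]
        ring_nf
      linarith [ih]
  -- assemble
  rintro T hT
  obtain ⟨T, rfl⟩ : ∃ T', T = T' + 1 := ⟨T - 1, (Nat.succ_pred_eq_of_pos hT).symm⟩
  have hsum1 : (∑ t ∈ range (T + 1), ⟪G t (x t), x t - xstar⟫) ≤
      ∑ t ∈ range (T + 1), ((‖x t - xstar‖ ^ 2 - ‖x (t + 1) - xstar‖ ^ 2) / (2 * η t)
        + Δ t / Real.sqrt (S t) * (1 / (2 * c_p))) :=
    Finset.sum_le_sum fun t _ => hkey t
  rw [Finset.sum_add_distrib] at hsum1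
  have hsum2 : ∑ t ∈ range (T + 1), Δ t / Real.sqrt (S t) * (1 / (2 * c_p)) ≤
      (1 / c_p) * Real.sqrt (S T) := by
    rw [← Finset.sum_mul]
    have h2 := sum_div_sqrt_aux Δ hΔpos (T + 1)
    have hST : S T = ∑ t ∈ range (T + 1), Δ t := rfl
    rw [hST]
    calc (∑ t ∈ range (T + 1), Δ t / Real.sqrt (∑ s ∈ range (t + 1), Δ s)) * (1 / (2 * c_p))
        ≤ (2 * Real.sqrt (∑ t ∈ range (T + 1), Δ t)) * (1 / (2 * c_p)) := by
          apply mul_le_mul_of_nonneg_right h2 (by positivity)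
      _ = 1 / c_p * Real.sqrt (∑ t ∈ range (T + 1), Δ t) := by
          field_simp
      _ = _ := by ring
  have habel' : (∑ t ∈ range (T + 1),
      (‖x t - xstar‖ ^ 2 - ‖x (t + 1) - xstar‖ ^ 2) / (2 * η t)) ≤
      2 * c_p * L * D ^ 2 * Real.sqrt (S T) := by
    refine le_trans (habel T) ?_
    have h1 : (D ^ 2 - ‖x (T + 1) - xstar‖ ^ 2) / (2 * η T) ≤ D ^ 2 / (2 * η T) := by
      have h0 : (0:ℝ) < 2 * η T := by linarith [hηpos T]
      apply (div_le_div_iff_of_pos_right h0).2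
      nlinarith [norm_nonneg (x (T + 1) - xstar)]
    refine le_trans h1 ?_
    rw [div_le_iff₀ (by linarith [hηpos T] : (0:ℝ) < 2 * η T)]
    have h2 := hηlb T
    have h3 : 1 ≤ 4 * c_p * L * Real.sqrt (S T) * η T := by
      have h4 : 0 < 4 * c_p * L * Real.sqrt (S T) := mul_pos (by positivity) (hsqS T)
      calc (1:ℝ) = (1 / (4 * c_p * L * Real.sqrt (S T))) * (4 * c_p * L * Real.sqrt (S T)) :=
            (one_div_mul_cancel (ne_of_gt h4)).symm
        _ ≤ η T * (4 * c_p * L * Real.sqrt (S T)) := by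
            apply mul_le_mul_of_nonneg_right h2 (le_of_lt h4)
        _ = _ := by ring
    nlinarith [sq_nonneg D, hsqS T, hηpos T]
  have hgoalS : (∑ t ∈ range (T + 1), (f t (x t) - ℓ t)) = S T := rfl
  rw [hgoalS]
  calc (∑ t ∈ range (T + 1), ⟪G t (x t), x t - xstar⟫)
      ≤ _ := hsum1
    _ ≤ 2 * c_p * L * D ^ 2 * Real.sqrt (S T) + 1 / c_p * Real.sqrt (S T) := by
        exact add_le_add habel' hsum2
    _ = (2 * c_p * L * D ^ 2 + 1 / c_p) * Real.sqrt (S T) := by ring
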